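/- For every n ≥ 2, the real symmetric matrix M ∈ ℝ^{2^n × 2^n} is positive definite: for every nonzero vector a ∈ ℝ^{2^n}, Σ_{j,k} a_j·M_{jk}·a_k > 0. -/

import Mathlib

/-- Hamming weight: number of 1's in the `n`-bit binary representation of `i`. -/
def hamW (n i : ℕ) : ℕ := ((Finset.range n).filter (fun p => i.testBit p)).card

/-- Hamming distance between the `n`-bit binary representations of `i` and `j`. -/
def hamD (n i j : ℕ) : ℕ :=
  ((Finset.range n).filter (fun p => i.testBit p ≠ j.testBit p)).card

/-- The matrix `M`. -/
noncomputable def Mmat (n : ℕ) : Matrix (Fin (2 ^ n)) (Fin (2 ^ n)) ℝ := fun i j =>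
  if i = j then
    ((n : ℝ) - 1) * (1 - 1 / Real.sqrt 2) +
      (1 / n) * ((n : ℝ) - (2 * (hamW n i : ℝ) - (n : ℝ)) ^ 2) * (1 - 1 / Real.sqrt 2) ^ 2
  else
    (2 / n) * (1 - 1 / Real.sqrt 2) ^ 2 *
      ((if hamD n i j = 1 then (n : ℝ) - 1 - 2 * (min (hamW n i) (hamW n j) : ℝ) else 0)
        - (if hamD n i j = 2 then 1 else 0))

open Finset


namespace Stmt8

noncomputable def c : ℝ := 1 - 1 / Real.sqrt 2

lemma sqrt2_gt_one : (1:ℝ) < Real.sqrt 2 := by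
  have : (1:ℝ) = Real.sqrt 1 := by simp
  rw [this]
  exact Real.sqrt_lt_sqrt (by norm_num) (by norm_num)

lemma c_pos : 0 < c := by
  have h := sqrt2_gt_one
  have : 1 / Real.sqrt 2 < 1 := by
    rw [div_lt_one (by linarith)]; exact h
  unfold c; linarith

lemma two_c_lt_one : 2 * c < 1 := by
  have h := sqrt2_gt_one
  have hs : Real.sqrt 2 ^ 2 = 2 := Real.sq_sqrt (by norm_num)
  have hlt : Real.sqrt 2 < 2 := by nlinarith
  have : 1 / 2 < 1 / Real.sqrt 2 := by
    apply one_div_lt_one_div_of_lt <;> linarith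
  unfold c; linarith

/-- flip bit `p` -/
def flipb (n p : ℕ) (j : Fin (2^n)) : Fin (2^n) :=
  ⟨((j:ℕ) ^^^ 2^p) % 2^n, Nat.mod_lt _ (Nat.pow_pos (n := n) (by norm_num))⟩

lemma flipb_val {n p : ℕ} (hp : p < n) (j : Fin (2^n)) :
    (flipb n p j : ℕ) = (j:ℕ) ^^^ 2^p := by
  have h2 : (2:ℕ)^p < 2^n := Nat.pow_lt_pow_right (by norm_num) hp
  exact Nat.mod_eq_of_lt (Nat.xor_lt_two_pow j.2 h2)

lemma flipb_flipb {n p : ℕ} (hp : p < n) (j : Fin (2^n)) :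
    flipb n p (flipb n p j) = j := by
  apply Fin.ext
  rw [flipb_val hp, flipb_val hp, Nat.xor_assoc, Nat.xor_self, Nat.xor_zero]

def zf (p m : ℕ) : ℝ := if m.testBit p then -1 else 1

lemma zf_sq (p m : ℕ) : zf p m * zf p m = 1 := by
  unfold zf; split <;> norm_num

lemma zf_flipb {n p : ℕ} (hp : p < n) (j : Fin (2^n)) :
    zf p (flipb n p j) = - zf p j := by
  rw [flipb_val hp]; unfold zf
  cases h : (j:ℕ).testBit p <;>
    simp [Nat.testBit_xor, Nat.testBit_two_pow, h]

lemma eq_flipb_iff {n p : ℕ} (hp : p < n) (j k : Fin (2^n)) :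
    k = flipb n p j ↔ (j:ℕ) ^^^ (k:ℕ) = 2^p := by
  constructor
  · rintro rfl
    rw [flipb_val hp, ← Nat.xor_assoc, Nat.xor_self, Nat.zero_xor]
  · intro h
    apply Fin.ext
    rw [flipb_val hp, ← h, ← Nat.xor_assoc, Nat.xor_self, Nat.zero_xor]

lemma eq_flipb2_iff {n p q : ℕ} (hp : p < n) (hq : q < n) (j k : Fin (2^n)) :
    k = flipb n q (flipb n p j) ↔ (j:ℕ) ^^^ (k:ℕ) = 2^p ^^^ 2^q := by
  rw [eq_flipb_iff hq, flipb_val hp, Nat.xor_assoc]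
  rw [← Nat.xor_right_inj (x := 2^p)]
  have lcomm : ∀ a b c : ℕ, a ^^^ (b ^^^ c) = b ^^^ (a ^^^ c) := fun a b c => by
    rw [← Nat.xor_assoc, Nat.xor_comm a b, Nat.xor_assoc]
  rw [lcomm ((j:ℕ))]
  simp [xor_cancel_left]

end Stmt8

section Chunk2
open Finset Stmt8

variable {n : ℕ}

lemma testBit_high {d t : ℕ} (hd : d < 2^n) (ht : n ≤ t) : d.testBit t = false :=
  Nat.testBit_eq_false_of_lt (lt_of_lt_of_le hd (Nat.pow_le_pow_right (by norm_num) ht))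

lemma hamD_eq (j k : ℕ) : hamD n j k = hamW n (j ^^^ k) := by
  unfold hamD hamW
  congr 1
  apply Finset.filter_congr
  intro p _
  simp only [Nat.testBit_xor]
  cases h1 : j.testBit p <;> cases h2 : k.testBit p <;> simp [h1, h2]

lemma hamD_self (j : ℕ) : hamD n j j = 0 := by simp [hamD]

lemma hamD_comm (j k : ℕ) : hamD n j k = hamD n k j := by
  unfold hamD
  congr 1
  apply Finset.filter_congr
  intro p _
  simp [ne_comm]

lemma hamW_zero : hamW n 0 = 0 := by simp [hamW]

lemma hamW_two_pow {r : ℕ} (hr : r < n) : hamW n (2^r) = 1 := by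
  unfold hamW
  have : (range n).filter (fun p => (2^r).testBit p) = {r} := by
    ext p
    simp [Nat.testBit_two_pow, Finset.mem_range]
    constructor
    · rintro ⟨_, h⟩; exact h.symm
    · rintro rfl; exact ⟨hr, rfl⟩
  rw [this]; rfl

lemma hamW_two_pow_xor {r s : ℕ} (hrs : r ≠ s) (hr : r < n) (hs : s < n) :
    hamW n (2^r ^^^ 2^s) = 2 := by
  unfold hamW
  have : (range n).filter (fun p => (2^r ^^^ 2^s).testBit p) = {r, s} := by
    ext p
    simp only [Finset.mem_filter, Finset.mem_range, Nat.testBit_xor,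
      Nat.testBit_two_pow, Finset.mem_insert, Finset.mem_singleton]
    by_cases h1 : r = p <;> by_cases h2 : s = p <;>
      simp [h1, h2] <;> omega
  rw [this, Finset.card_insert_of_notMem (by simp [hrs]), Finset.card_singleton]

lemma eq_zero_of_hamW_zero {d : ℕ} (hd : d < 2^n) (h : hamW n d = 0) : d = 0 := by
  apply Nat.zero_of_testBit_eq_false
  intro t
  by_cases ht : t < n
  · by_contra hb
    rw [Bool.not_eq_false] at hb
    have hmem : t ∈ (range n).filter (fun p => d.testBit p) := by
      simp [Finset.mem_filter, Finset.mem_range, ht, hb]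
    rw [Finset.card_eq_zero.mp h] at hmem
    exact absurd hmem (Finset.notMem_empty t)
  · exact testBit_high hd (le_of_not_gt ht)

lemma eq_of_hamW_one {d : ℕ} (hd : d < 2^n) (h : hamW n d = 1) :
    ∃ r, r < n ∧ d = 2^r := by
  obtain ⟨r, hfr⟩ := Finset.card_eq_one.mp h
  have hrmem : r ∈ (range n).filter (fun p => d.testBit p) := hfr ▸ Finset.mem_singleton_self r
  simp only [Finset.mem_filter, Finset.mem_range] at hrmem
  refine ⟨r, hrmem.1, Nat.eq_of_testBit_eq fun t => ?_⟩
  rw [Nat.testBit_two_pow]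
  by_cases ht : t < n
  · have : t ∈ (range n).filter (fun p => d.testBit p) ↔ t = r := by
      rw [hfr]; simp
    simp only [Finset.mem_filter, Finset.mem_range] at this
    by_cases hb : d.testBit t
    · simp [hb, (this.mp ⟨ht, hb⟩).symm]
    · simp only [Bool.not_eq_true] at hb
      rw [hb]
      symm
      simp only [decide_eq_false_iff_not]
      intro hrt
      subst hrt
      rw [hrmem.2] at hb
      exact Bool.noConfusion hb
  · rw [testBit_high hd (le_of_not_gt ht)]
    symm
    simp only [decide_eq_false_iff_not]
    intro hrt
    omega
lemma eq_of_hamW_two {d : ℕ} (hd : d < 2^n) (h : hamW n d = 2) :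
    ∃ r s, r ≠ s ∧ r < n ∧ s < n ∧ d = 2^r ^^^ 2^s := by
  obtain ⟨r, s, hrs, hfr⟩ := Finset.card_eq_two.mp h
  have hrmem : r ∈ (range n).filter (fun p => d.testBit p) := by
    rw [hfr]; simp
  have hsmem : s ∈ (range n).filter (fun p => d.testBit p) := by
    rw [hfr]; simp
  simp only [Finset.mem_filter, Finset.mem_range] at hrmem hsmem
  have hiff : ∀ t, d.testBit t = true ↔ (t = r ∨ t = s) := by
    intro t
    constructor
    · intro hb
      by_cases ht : t < n
      · have : t ∈ (range n).filter (fun p => d.testBit p) := by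
          simp [Finset.mem_filter, Finset.mem_range, ht, hb]
        rw [hfr] at this
        simpa using this
      · rw [testBit_high hd (le_of_not_gt ht)] at hb
        exact Bool.noConfusion hb
    · rintro (rfl | rfl)
      · exact hrmem.2
      · exact hsmem.2
  refine ⟨r, s, hrs, hrmem.1, hsmem.1, Nat.eq_of_testBit_eq fun t => ?_⟩
  rw [Nat.testBit_xor, Nat.testBit_two_pow, Nat.testBit_two_pow]
  by_cases h1 : t = r
  · subst h1
    simp [(hiff t).mpr (Or.inl rfl), Ne.symm hrs]
  · by_cases h2 : t = s
    · subst h2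
      simp [(hiff t).mpr (Or.inr rfl), hrs]
    · have hbf : d.testBit t = false := by
        rw [← Bool.not_eq_true]
        intro hb
        rcases (hiff t).mp hb with h | h
        · exact h1 h
        · exact h2 h
      have hr' : r ≠ t := fun h => h1 h.symm
      have hs' : s ≠ t := fun h => h2 h.symm
      simp [hbf, hr', hs']
lemma sum_zf (m : ℕ) : ∑ p ∈ range n, zf p m = (n : ℝ) - 2 * hamW n m := by
  have hz : ∀ p, zf p m = 1 - 2 * (if m.testBit p then (1:ℝ) else 0) := by
    intro p; unfold zf; split <;> norm_num
  simp only [hz]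
  rw [Finset.sum_sub_distrib, Finset.sum_const, ← Finset.mul_sum, Finset.sum_boole]
  unfold hamW
  simp

lemma hamW_flipb {p : ℕ} (hp : p < n) (j : Fin (2^n)) :
    hamW n (flipb n p j) = hamW n (j:ℕ) + 1 ∨ hamW n (j:ℕ) = hamW n (flipb n p j) + 1 := by
  set F := (range n).filter (fun q => (j:ℕ).testBit q) with hF
  cases h : (j:ℕ).testBit p
  · left
    have : (range n).filter (fun q => ((flipb n p j : ℕ)).testBit q) = insert p F := by
      ext q
      simp only [Finset.mem_filter, Finset.mem_range, Finset.mem_insert, hF, flipb_val hp,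
        Nat.testBit_xor, Nat.testBit_two_pow]
      by_cases hq : q = p
      · subst hq; simp [h, hp]
      · have : ¬ (p = q) := fun hpq => hq hpq.symm
        simp [this, hq]
    unfold hamW
    rw [this, Finset.card_insert_of_notMem (by simp [hF, h])]
  · right
    have hpF : p ∈ F := by simp [hF, Finset.mem_range, hp, h]
    have : (range n).filter (fun q => ((flipb n p j : ℕ)).testBit q) = F.erase p := by
      ext q
      simp only [Finset.mem_filter, Finset.mem_range, Finset.mem_erase, hF, flipb_val hp,
        Nat.testBit_xor, Nat.testBit_two_pow]
      by_cases hq : q = p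
      · subst hq; simp [h]
      · have : ¬ (p = q) := fun hpq => hq hpq.symm
        simp [this, hq]
    unfold hamW
    rw [this, Finset.card_erase_of_mem hpF]
    rw [← hF]
    have : 0 < F.card := Finset.card_pos.mpr ⟨p, hpF⟩
    omega
def Aent (n p : ℕ) (j k : Fin (2^n)) : ℝ :=
  zf p (j:ℕ) * (if k = j then 1 else 0) - (if k = flipb n p j then 1 else 0)

lemma flipb_eq_comm {p : ℕ} (hp : p < n) (i j : Fin (2^n)) :
    i = flipb n p j ↔ j = flipb n p i := by
  constructor <;> rintro rfl <;> rw [flipb_flipb hp]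

lemma col_sum {p : ℕ} (hp : p < n) (a : Fin (2^n) → ℝ) (i : Fin (2^n)) :
    ∑ k, Aent n p i k * a k = zf p (i:ℕ) * a i - a (flipb n p i) := by
  unfold Aent
  simp only [sub_mul, ite_mul, mul_ite, one_mul, zero_mul, mul_one, mul_zero]
  rw [Finset.sum_sub_distrib]
  simp

lemma row_sum {p : ℕ} (hp : p < n) (a : Fin (2^n) → ℝ) (i : Fin (2^n)) :
    ∑ j, a j * Aent n p j i = zf p (i:ℕ) * a i - a (flipb n p i) := by
  unfold Aent
  have hcond : ∀ j : Fin (2^n), (i = flipb n p j) = (j = flipb n p i) := by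
    intro j; exact propext (flipb_eq_comm hp i j)
  simp only [hcond]
  simp only [mul_sub, mul_ite, ite_mul, one_mul, zero_mul, mul_one, mul_zero]
  rw [Finset.sum_sub_distrib]
  have h1 : ∑ j : Fin (2^n), (if i = j then a j * zf p (j:ℕ) else 0) = a i * zf p (i:ℕ) := by
    rw [Finset.sum_ite_eq]
    simp
  have h2 : ∑ j : Fin (2^n), (if j = flipb n p i then a j else 0) = a (flipb n p i) := by
    rw [Finset.sum_ite_eq']
    simp
  rw [h1, h2]
  ring

noncomputable def Tent (n : ℕ) (j k : Fin (2^n)) : ℝ :=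
  ∑ p ∈ range n, ∑ q ∈ range n, ∑ i, Aent n p j i * Aent n q i k

lemma Tent_collapse (j k : Fin (2^n)) : Tent n j k = ∑ p ∈ range n, ∑ q ∈ range n,
    (zf p (j:ℕ) * Aent n q j k - Aent n q (flipb n p j) k) := by
  unfold Tent
  refine Finset.sum_congr rfl fun p hp => Finset.sum_congr rfl fun q hq => ?_
  have : ∀ i, Aent n p j i * Aent n q i k
      = (if i = j then zf p (j:ℕ) * Aent n q i k else 0)
        - (if i = flipb n p j then Aent n q i k else 0) := by
    intro i
    unfold Aent
    split_ifs <;> ring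
  simp only [this]
  rw [Finset.sum_sub_distrib, Finset.sum_ite_eq', Finset.sum_ite_eq']
  simp

lemma Tent_factor (j k : Fin (2^n)) : Tent n j k
    = ∑ i, (∑ p ∈ range n, Aent n p j i) * (∑ q ∈ range n, Aent n q i k) := by
  unfold Tent
  have h1 : ∀ p, (∑ q ∈ range n, ∑ i : Fin (2^n), Aent n p j i * Aent n q i k)
      = ∑ i : Fin (2^n), Aent n p j i * ∑ q ∈ range n, Aent n q i k := by
    intro p
    rw [Finset.sum_comm]
    exact Finset.sum_congr rfl fun i _ => by rw [Finset.mul_sum]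
  rw [Finset.sum_congr rfl fun p _ => h1 p, Finset.sum_comm]
  exact Finset.sum_congr rfl fun i _ => by rw [Finset.sum_mul]

noncomputable def gv (n : ℕ) (a : Fin (2^n) → ℝ) (i : Fin (2^n)) : ℝ :=
  ∑ p ∈ range n, (zf p (i:ℕ) * a i - a (flipb n p i))

lemma quad_expand (a : Fin (2^n) → ℝ) :
    (∑ j, ∑ k, a j * Tent n j k * a k) = ∑ i, (gv n a i)^2 := by
  have h2 : ∀ j k : Fin (2^n), a j * Tent n j k * a k
      = ∑ i, (a j * (∑ p ∈ range n, Aent n p j i)) * ((∑ q ∈ range n, Aent n q i k) * a k) := by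
    intro j k
    rw [Tent_factor]
    rw [Finset.mul_sum, Finset.sum_mul]
    exact Finset.sum_congr rfl fun i _ => by ring
  simp only [h2]
  have h3 : ∀ j : Fin (2^n), (∑ k, ∑ i, (a j * (∑ p ∈ range n, Aent n p j i)) * ((∑ q ∈ range n, Aent n q i k) * a k))
      = ∑ i, (a j * (∑ p ∈ range n, Aent n p j i)) * ∑ k, ((∑ q ∈ range n, Aent n q i k) * a k) := by
    intro j
    rw [Finset.sum_comm]
    exact Finset.sum_congr rfl fun i _ => by rw [← Finset.mul_sum]
  rw [Finset.sum_congr rfl fun j _ => h3 j, Finset.sum_comm]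
  refine Finset.sum_congr rfl fun i _ => ?_
  rw [← Finset.sum_mul]
  have hL : (∑ j, a j * (∑ p ∈ range n, Aent n p j i)) = gv n a i := by
    have : ∀ j : Fin (2^n), a j * (∑ p ∈ range n, Aent n p j i)
        = ∑ p ∈ range n, a j * Aent n p j i := fun j => Finset.mul_sum _ _ _
    rw [Finset.sum_congr rfl fun j _ => this j, Finset.sum_comm]
    exact Finset.sum_congr rfl fun p hp => row_sum (Finset.mem_range.mp hp) a i
  have hR : (∑ k, (∑ q ∈ range n, Aent n q i k) * a k) = gv n a i := by
    have : ∀ k : Fin (2^n), (∑ q ∈ range n, Aent n q i k) * a k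
        = ∑ q ∈ range n, Aent n q i k * a k := fun k => Finset.sum_mul _ _ _
    rw [Finset.sum_congr rfl fun k _ => this k, Finset.sum_comm]
    exact Finset.sum_congr rfl fun q hq => col_sum (Finset.mem_range.mp hq) a i
  rw [hL, hR, sq]
lemma pow_xor_eq_pow_xor_iff {p q r s : ℕ} (hrs : r ≠ s) :
    2^p ^^^ 2^q = 2^r ^^^ 2^s ↔ (p = r ∧ q = s) ∨ (p = s ∧ q = r) := by
  constructor
  · intro h
    have hb : ∀ t, (decide (p = t) ^^ decide (q = t)) = (decide (r = t) ^^ decide (s = t)) := by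
      intro t
      have := congrArg (fun x => Nat.testBit x t) h
      simpa [Nat.testBit_xor, Nat.testBit_two_pow] using this
    by_cases hpr : p = r
    · subst hpr
      left
      refine ⟨rfl, ?_⟩
      have h2 := hb s
      simpa [hrs] using h2
    · by_cases hps : p = s
      · subst hps
        right
        refine ⟨rfl, ?_⟩
        have h2 := hb r
        simpa [hrs, Ne.symm hrs, hpr] using h2
      · exfalso
        have hq_p : q = p := by
          have h3 := hb p
          simp [show ¬ r = p from fun h => hpr h.symm,
                show ¬ s = p from fun h => hps h.symm] at h3
          exact h3
        subst hq_p
        have h4 := hb r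
        simp [hpr, show ¬ s = r from fun h => hrs h.symm] at h4
  · rintro (⟨rfl, rfl⟩ | ⟨rfl, rfl⟩)
    · rfl
    · exact Nat.xor_comm _ _

lemma ind_or {P Q : Prop} [Decidable P] [Decidable Q] (h : ¬(P ∧ Q)) :
    (if P ∨ Q then (1:ℝ) else 0) = (if P then 1 else 0) + (if Q then 1 else 0) := by
  by_cases hP : P <;> by_cases hQ : Q
  · exact absurd ⟨hP, hQ⟩ h
  · simp [hP, hQ]
  · simp [hP, hQ]
  · simp [hP, hQ]

lemma sum_ind_pair {u v : ℕ} (hu : u < n) (hv : v < n) :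
    ∑ p ∈ range n, ∑ q ∈ range n, (if p = u ∧ q = v then (1:ℝ) else 0) = 1 := by
  have h : ∀ p q : ℕ, (if p = u ∧ q = v then (1:ℝ) else 0)
      = (if p = u then (1:ℝ) else 0) * (if q = v then (1:ℝ) else 0) := by
    intro p q; split_ifs <;> simp_all
  simp only [h]
  rw [← Finset.sum_mul_sum]
  simp [Finset.sum_ite_eq', Finset.mem_range, hu, hv]

lemma not_self_flipb {p : ℕ} (hp : p < n) (j : Fin (2^n)) : ¬ (j = flipb n p j) := by
  rw [eq_flipb_iff hp, Nat.xor_self]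
  have : (0:ℕ) < 2^p := Nat.pow_pos (n := p) (by norm_num)
  omega

lemma Tent_diag (j : Fin (2^n)) :
    Tent n j j = ((n:ℝ) - 2 * hamW n (j:ℕ))^2 + n := by
  rw [Tent_collapse]
  have hterm : ∀ p ∈ range n, ∀ q ∈ range n,
      zf p (j:ℕ) * Aent n q j j - Aent n q (flipb n p j) j
      = zf p (j:ℕ) * zf q (j:ℕ) + (if p = q then (1:ℝ) else 0) := by
    intro p hp q hq
    rw [Finset.mem_range] at hp hq
    have h1 : Aent n q j j = zf q (j:ℕ) := by
      unfold Aent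
      rw [if_pos rfl, if_neg (not_self_flipb hq j), mul_one, sub_zero]
    have h2 : Aent n q (flipb n p j) j = - (if p = q then (1:ℝ) else 0) := by
      unfold Aent
      have hc2 : (j = flipb n q (flipb n p j)) ↔ p = q := by
        rw [eq_flipb2_iff hp hq, Nat.xor_self]
        constructor
        · intro h
          exact Nat.pow_right_injective (le_refl 2) (Nat.xor_eq_zero_iff.mp h.symm)
        · rintro rfl; rw [Nat.xor_self]
      rw [if_neg (not_self_flipb hp j), mul_zero, zero_sub]
      congr 1
      by_cases hpq : p = q
      · rw [if_pos (hc2.mpr hpq), if_pos hpq]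
      · rw [if_neg (fun h => hpq (hc2.mp h)), if_neg hpq]
    rw [h1, h2]
    ring
  rw [Finset.sum_congr rfl fun p hp => Finset.sum_congr rfl fun q hq => hterm p hp q hq]
  simp only [Finset.sum_add_distrib]
  have hA : ∑ p ∈ range n, ∑ q ∈ range n, zf p (j:ℕ) * zf q (j:ℕ)
      = ((n:ℝ) - 2 * hamW n (j:ℕ))^2 := by
    rw [← Finset.sum_mul_sum, sum_zf]
    ring
  have hB : ∑ p ∈ range n, ∑ q ∈ range n, (if p = q then (1:ℝ) else 0) = n := by
    have h : ∀ p ∈ range n, ∑ q ∈ range n, (if p = q then (1:ℝ) else 0) = 1 := by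
      intro p hp
      rw [Finset.sum_ite_eq]
      simp [Finset.mem_range.mp hp]
    rw [Finset.sum_congr rfl h]
    simp
  rw [hA, hB]

lemma Tent_one {r : ℕ} {j k : Fin (2^n)} (hr : r < n) (hjk : j ≠ k)
    (hd2 : (j:ℕ) ^^^ (k:ℕ) = 2^r) :
    Tent n j k = -((n:ℝ) - 2 * hamW n (j:ℕ)) - ((n:ℝ) - 2 * hamW n (k:ℕ)) := by
  have hk : k = flipb n r j := (eq_flipb_iff hr j k).mpr hd2
  rw [Tent_collapse]
  have hterm : ∀ p ∈ range n, ∀ q ∈ range n,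
      zf p (j:ℕ) * Aent n q j k - Aent n q (flipb n p j) k
      = (if q = r then -zf p (j:ℕ) else 0) + (if p = r then -zf q (k:ℕ) else 0) := by
    intro p hp q hq
    rw [Finset.mem_range] at hp hq
    have h1 : Aent n q j k = - (if q = r then (1:ℝ) else 0) := by
      unfold Aent
      have hcc : (k = flipb n q j) ↔ q = r := by
        rw [eq_flipb_iff hq, hd2]
        constructor
        · intro h
          exact (Nat.pow_right_injective (le_refl 2) h).symm
        · rintro rfl; rfl
      rw [if_neg (fun h => hjk h.symm), mul_zero, zero_sub]
      congr 1
      by_cases hqr : q = r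
      · rw [if_pos (hcc.mpr hqr), if_pos hqr]
      · rw [if_neg (fun h => hqr (hcc.mp h)), if_neg hqr]
    have h2 : Aent n q (flipb n p j) k = (if p = r then zf q (k:ℕ) else 0) := by
      unfold Aent
      have hcc : (k = flipb n p j) ↔ p = r := by
        rw [eq_flipb_iff hp, hd2]
        constructor
        · intro h
          exact (Nat.pow_right_injective (le_refl 2) h).symm
        · rintro rfl; rfl
      have hno : ¬ (k = flipb n q (flipb n p j)) := by
        rw [eq_flipb2_iff hp hq, hd2]
        intro h
        by_cases hpq : p = q
        · subst hpq
          rw [Nat.xor_self] at h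
          have : (0:ℕ) < 2^r := Nat.pow_pos (n := r) (by norm_num)
          omega
        · have e1 : hamW n (2^r) = 1 := hamW_two_pow hr
          have e2 : hamW n (2^p ^^^ 2^q) = 2 := hamW_two_pow_xor hpq hp hq
          rw [h] at e1
          omega
      rw [if_neg hno, sub_zero]
      by_cases hpr : p = r
      · subst hpr
        rw [if_pos (hcc.mpr rfl), mul_one, if_pos rfl, ← hk]
      · rw [if_neg (fun h => hpr (hcc.mp h)), mul_zero, if_neg hpr]
    rw [h1, h2]
    split_ifs <;> ring
  rw [Finset.sum_congr rfl fun p hp => Finset.sum_congr rfl fun q hq => hterm p hp q hq]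
  simp only [Finset.sum_add_distrib]
  have hS1 : ∑ p ∈ range n, ∑ q ∈ range n, (if q = r then -zf p (j:ℕ) else 0)
      = -((n:ℝ) - 2 * hamW n (j:ℕ)) := by
    have h : ∀ p ∈ range n, ∑ q ∈ range n, (if q = r then -zf p (j:ℕ) else 0)
        = -zf p (j:ℕ) := by
      intro p hp
      rw [Finset.sum_ite_eq']
      simp [Finset.mem_range, hr]
    rw [Finset.sum_congr rfl h, ← sum_zf]
    simp
  have hS2 : ∑ p ∈ range n, ∑ q ∈ range n, (if p = r then -zf q (k:ℕ) else 0)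
      = -((n:ℝ) - 2 * hamW n (k:ℕ)) := by
    rw [Finset.sum_comm]
    have h : ∀ q ∈ range n, ∑ p ∈ range n, (if p = r then -zf q (k:ℕ) else 0)
        = -zf q (k:ℕ) := by
      intro q hq
      rw [Finset.sum_ite_eq']
      simp [Finset.mem_range, hr]
    rw [Finset.sum_congr rfl h, ← sum_zf]
    simp
  rw [hS1, hS2]
  ring

lemma Tent_two {r s : ℕ} {j k : Fin (2^n)} (hrs : r ≠ s) (hr : r < n) (hs : s < n)
    (hjk : j ≠ k) (hd2 : (j:ℕ) ^^^ (k:ℕ) = 2^r ^^^ 2^s) :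
    Tent n j k = 2 := by
  rw [Tent_collapse]
  have hterm : ∀ p ∈ range n, ∀ q ∈ range n,
      zf p (j:ℕ) * Aent n q j k - Aent n q (flipb n p j) k
      = (if p = r ∧ q = s then (1:ℝ) else 0) + (if p = s ∧ q = r then (1:ℝ) else 0) := by
    intro p hp q hq
    rw [Finset.mem_range] at hp hq
    have hone : ∀ t, t < n → ¬ ((j:ℕ) ^^^ (k:ℕ) = 2^t) := by
      intro t ht h
      have e1 : hamW n (2^r ^^^ 2^s) = 2 := hamW_two_pow_xor hrs hr hs
      have e2 : hamW n (2^t) = 1 := hamW_two_pow ht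
      rw [← hd2, h] at e1
      omega
    have h1 : Aent n q j k = 0 := by
      unfold Aent
      rw [if_neg (fun h => hjk h.symm), mul_zero,
        if_neg (fun h => hone q hq ((eq_flipb_iff hq j k).mp h)), sub_zero]
    have h2 : Aent n q (flipb n p j) k
        = - (if (p = r ∧ q = s) ∨ (p = s ∧ q = r) then (1:ℝ) else 0) := by
      unfold Aent
      have hcc : (k = flipb n q (flipb n p j)) ↔ ((p = r ∧ q = s) ∨ (p = s ∧ q = r)) := by
        rw [eq_flipb2_iff hp hq, hd2, eq_comm]
        exact pow_xor_eq_pow_xor_iff hrs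
      rw [if_neg (fun h => hone p hp ((eq_flipb_iff hp j k).mp h)), mul_zero, zero_sub]
      congr 1
      by_cases hd : (p = r ∧ q = s) ∨ (p = s ∧ q = r)
      · rw [if_pos (hcc.mpr hd), if_pos hd]
      · rw [if_neg (fun h => hd (hcc.mp h)), if_neg hd]
    rw [h1, h2, mul_zero, zero_sub, neg_neg]
    apply ind_or
    intro hcon
    obtain ⟨⟨e1, e2⟩, e3, e4⟩ := hcon
    omega
  rw [Finset.sum_congr rfl fun p hp => Finset.sum_congr rfl fun q hq => hterm p hp q hq]
  simp only [Finset.sum_add_distrib]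
  rw [sum_ind_pair hr hs, sum_ind_pair hs hr]
  norm_num

lemma Tent_other {j k : Fin (2^n)} (h0 : hamD n (j:ℕ) (k:ℕ) ≠ 0)
    (h1 : hamD n (j:ℕ) (k:ℕ) ≠ 1) (h2 : hamD n (j:ℕ) (k:ℕ) ≠ 2) :
    Tent n j k = 0 := by
  have hjk : j ≠ k := by
    intro h
    subst h
    exact h0 (hamD_self (j:ℕ))
  have hdd : hamD n (j:ℕ) (k:ℕ) = hamW n ((j:ℕ) ^^^ (k:ℕ)) := hamD_eq _ _
  rw [Tent_collapse]
  have hone : ∀ t, t < n → ¬ ((j:ℕ) ^^^ (k:ℕ) = 2^t) := by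
    intro t ht h
    exact h1 (by rw [hdd, h, hamW_two_pow ht])
  have hterm : ∀ p ∈ range n, ∀ q ∈ range n,
      zf p (j:ℕ) * Aent n q j k - Aent n q (flipb n p j) k = 0 := by
    intro p hp q hq
    rw [Finset.mem_range] at hp hq
    have htwo : ¬ (k = flipb n q (flipb n p j)) := by
      rw [eq_flipb2_iff hp hq]
      intro h
      by_cases hpq : p = q
      · subst hpq
        rw [Nat.xor_self] at h
        exact hjk (Fin.ext (Nat.xor_eq_zero_iff.mp h))
      · exact h2 (by rw [hdd, h, hamW_two_pow_xor hpq hp hq])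
    unfold Aent
    rw [if_neg (fun h => hjk h.symm), mul_zero,
      if_neg (fun h => hone q hq ((eq_flipb_iff hq j k).mp h)),
      if_neg (fun h => hone p hp ((eq_flipb_iff hp j k).mp h)),
      if_neg htwo]
    ring
  rw [Finset.sum_congr rfl fun p hp => Finset.sum_congr rfl fun q hq => hterm p hp q hq]
  simp

lemma key (hn : 2 ≤ n) (j k : Fin (2^n)) :
    Mmat n j k = (if j = k then ((n:ℝ)-1) * c + 2 * c^2 else 0) - c^2/(n:ℝ) * Tent n j k := by
  have hn0 : (n:ℝ) ≠ 0 := Nat.cast_ne_zero.mpr (by omega)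
  have hdlt : (j:ℕ) ^^^ (k:ℕ) < 2^n := Nat.xor_lt_two_pow j.2 k.2
  have hdd : hamD n (j:ℕ) (k:ℕ) = hamW n ((j:ℕ) ^^^ (k:ℕ)) := hamD_eq _ _
  have hcc : (1 - 1/Real.sqrt 2) = c := rfl
  by_cases h0 : hamD n (j:ℕ) (k:ℕ) = 0
  · have hjk : j = k := by
      rw [hdd] at h0
      exact Fin.ext (Nat.xor_eq_zero_iff.mp (eq_zero_of_hamW_zero hdlt h0))
    subst hjk
    rw [Tent_diag, if_pos rfl]
    unfold Mmat
    rw [if_pos rfl, hcc]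
    field_simp
    ring
  · have hjk : j ≠ k := by
      intro h
      subst h
      exact h0 (hamD_self (j:ℕ))
    by_cases h1 : hamD n (j:ℕ) (k:ℕ) = 1
    · rw [hdd] at h1
      obtain ⟨r, hr, hd2⟩ := eq_of_hamW_one hdlt h1
      rw [Tent_one hr hjk hd2, if_neg hjk]
      unfold Mmat
      rw [if_neg hjk, if_pos (by rw [hdd]; exact h1), if_neg (by rw [hdd]; omega), hcc]
      have hk : k = flipb n r j := (eq_flipb_iff hr j k).mpr hd2
      have hflip := hamW_flipb hr j
      rw [← hk] at hflip
      have hmm : hamW n (j:ℕ) + hamW n (k:ℕ) = 2 * min (hamW n (j:ℕ)) (hamW n (k:ℕ)) + 1 := by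
        omega
      have hmm' : (hamW n (j:ℕ) : ℝ) + (hamW n (k:ℕ) : ℝ)
          = 2 * min ((hamW n (j:ℕ) : ℝ)) ((hamW n (k:ℕ) : ℝ)) + 1 := by
        exact_mod_cast hmm
      linear_combination (2 * c^2 / (n:ℝ)) * hmm'
    · by_cases h2 : hamD n (j:ℕ) (k:ℕ) = 2
      · rw [hdd] at h2
        obtain ⟨r, s, hrs, hr, hs, hd2⟩ := eq_of_hamW_two hdlt h2
        rw [Tent_two hrs hr hs hjk hd2, if_neg hjk]
        unfold Mmat
        rw [if_neg hjk, if_neg h1, if_pos (by rw [hdd]; exact h2), hcc]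
        ring
      · rw [Tent_other h0 h1 h2, if_neg hjk]
        unfold Mmat
        rw [if_neg hjk, if_neg h1, if_neg h2]
        ring
lemma sum_comp_flip {p : ℕ} (hp : p < n) (f : Fin (2^n) → ℝ) :
    ∑ i, f (flipb n p i) = ∑ i, f i :=
  Function.Bijective.sum_comp (Function.Involutive.bijective (fun j => flipb_flipb hp j)) f

lemma cross_zero {p : ℕ} (hp : p < n) (a : Fin (2^n) → ℝ) :
    ∑ i : Fin (2^n), zf p (i:ℕ) * a i * a (flipb n p i) = 0 := by
  have h1 := sum_comp_flip hp (fun i => zf p (i:ℕ) * a i * a (flipb n p i))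
  have h2 : ∀ i : Fin (2^n),
      zf p ((flipb n p i : Fin (2^n)):ℕ) * a (flipb n p i) * a (flipb n p (flipb n p i))
      = -(zf p (i:ℕ) * a i * a (flipb n p i)) := by
    intro i
    rw [flipb_flipb hp, zf_flipb hp]
    ring
  simp only [h2] at h1
  rw [Finset.sum_neg_distrib] at h1
  linarith

lemma Aop_norm {p : ℕ} (hp : p < n) (a : Fin (2^n) → ℝ) :
    ∑ i : Fin (2^n), (zf p (i:ℕ) * a i - a (flipb n p i))^2
      = 2 * ∑ i : Fin (2^n), (a i)^2 := by
  have hexp : ∀ i : Fin (2^n), (zf p (i:ℕ) * a i - a (flipb n p i))^2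
      = (a i)^2 + (a (flipb n p i))^2 - 2 * (zf p (i:ℕ) * a i * a (flipb n p i)) := by
    intro i
    linear_combination (a i)^2 * zf_sq p (i:ℕ)
  simp only [hexp]
  rw [Finset.sum_sub_distrib, Finset.sum_add_distrib, sum_comp_flip hp (fun i => (a i)^2),
    ← Finset.mul_sum, cross_zero hp a]
  ring

lemma gv_bound (a : Fin (2^n) → ℝ) :
    ∑ i, (gv n a i)^2 ≤ 2 * (n:ℝ)^2 * ∑ i, (a i)^2 := by
  have h1 : ∀ i : Fin (2^n), (gv n a i)^2
      ≤ (n:ℝ) * ∑ p ∈ range n, (zf p (i:ℕ) * a i - a (flipb n p i))^2 := by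
    intro i
    have := sq_sum_le_card_mul_sum_sq (s := range n)
      (f := fun p => zf p (i:ℕ) * a i - a (flipb n p i))
    simpa [gv, Finset.card_range] using this
  calc ∑ i, (gv n a i)^2
      ≤ ∑ i : Fin (2^n), (n:ℝ) * ∑ p ∈ range n, (zf p (i:ℕ) * a i - a (flipb n p i))^2 :=
        Finset.sum_le_sum (fun i _ => h1 i)
    _ = (n:ℝ) * ∑ p ∈ range n, ∑ i : Fin (2^n), (zf p (i:ℕ) * a i - a (flipb n p i))^2 := by
        rw [← Finset.mul_sum, Finset.sum_comm]
    _ = (n:ℝ) * ∑ p ∈ range n, 2 * ∑ i : Fin (2^n), (a i)^2 := by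
        congr 1
        exact Finset.sum_congr rfl fun p hp => Aop_norm (Finset.mem_range.mp hp) a
    _ = 2 * (n:ℝ)^2 * ∑ i, (a i)^2 := by
        rw [Finset.sum_const, Finset.card_range, nsmul_eq_mul]
        ring

end Chunk2


open Stmt8 Finset

/-- For every `n ≥ 2`, the real symmetric matrix `M` is positive definite: it is
symmetric and every nonzero real vector `a` satisfies `Σ_{j,k} a_j M_{jk} a_k > 0`. -/
theorem stmt8 (n : ℕ) (hn : 2 ≤ n) :
    (Mmat n).IsSymm ∧
    ∀ a : Fin (2 ^ n) → ℝ, a ≠ 0 →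
      0 < ∑ j : Fin (2 ^ n), ∑ k : Fin (2 ^ n), a j * Mmat n j k * a k := by
  constructor
  · apply Matrix.ext
    intro i j
    rw [Matrix.transpose_apply]
    show Mmat n j i = Mmat n i j
    by_cases h : i = j
    · subst h; rfl
    · unfold Mmat
      rw [if_neg (fun hh => h hh.symm), if_neg h, hamD_comm (j:ℕ) (i:ℕ),
        min_comm ((hamW n (j:ℕ)):ℝ) ((hamW n (i:ℕ)):ℝ)]
  · intro a ha
    have hQ : (∑ j : Fin (2^n), ∑ k : Fin (2^n), a j * Mmat n j k * a k)
        = (((n:ℝ)-1)*c + 2*c^2) * ∑ i, (a i)^2 - c^2/(n:ℝ) * ∑ i, (gv n a i)^2 := by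
      rw [← quad_expand a]
      have hterm : ∀ j k : Fin (2^n), a j * Mmat n j k * a k
          = a j * (if j = k then ((n:ℝ)-1)*c + 2*c^2 else 0) * a k
            - c^2/(n:ℝ) * (a j * Tent n j k * a k) := by
        intro j k
        rw [key hn j k]
        ring
      simp only [hterm]
      simp only [Finset.sum_sub_distrib, ← Finset.mul_sum]
      congr 1
      have hone : ∀ j : Fin (2^n),
          (∑ k, a j * (if j = k then (((n:ℝ)-1)*c + 2*c^2) else 0) * a k)
          = (((n:ℝ)-1)*c + 2*c^2) * (a j)^2 := by
        intro j
        simp only [mul_ite, ite_mul, mul_zero, zero_mul]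
        rw [Finset.sum_ite_eq]
        simp only [Finset.mem_univ, if_true]
        ring
      rw [Finset.sum_congr rfl fun j _ => hone j, ← Finset.mul_sum]
    rw [hQ]
    have hS : 0 < ∑ i, (a i)^2 := by
      obtain ⟨i0, hi0⟩ := Function.ne_iff.mp ha
      have hi0' : a i0 ≠ 0 := by simpa using hi0
      refine Finset.sum_pos' (fun i _ => sq_nonneg _) ⟨i0, Finset.mem_univ i0, ?_⟩
      exact lt_of_le_of_ne (sq_nonneg _) (Ne.symm (pow_ne_zero 2 hi0'))
    have hG0 : 0 ≤ ∑ i, (gv n a i)^2 := Finset.sum_nonneg fun i _ => sq_nonneg _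
    have hGb := gv_bound (n := n) a
    have hc := c_pos
    have h2c := two_c_lt_one
    have hn2 : (2:ℝ) ≤ (n:ℝ) := by exact_mod_cast hn
    have hnpos : (0:ℝ) < (n:ℝ) := by linarith
    have step1 : c^2/(n:ℝ) * ∑ i, (gv n a i)^2
        ≤ c^2/(n:ℝ) * (2*(n:ℝ)^2*∑ i, (a i)^2) :=
      mul_le_mul_of_nonneg_left hGb (by positivity)
    have step2 : c^2/(n:ℝ) * (2*(n:ℝ)^2*∑ i, (a i)^2) = 2*c^2*(n:ℝ)*∑ i, (a i)^2 := by
      field_simp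
    have key3 : 0 < ((n:ℝ)-1) * (c * (1-2*c)) :=
      mul_pos (by linarith) (mul_pos hc (by linarith))
    have step3 : 2*c^2*(n:ℝ) < ((n:ℝ)-1)*c + 2*c^2 := by nlinarith [key3]
    have step4 : 2*c^2*(n:ℝ)*∑ i, (a i)^2 < (((n:ℝ)-1)*c + 2*c^2)*∑ i, (a i)^2 :=
      mul_lt_mul_of_pos_right step3 hS
    have step1' : c^2/(n:ℝ) * ∑ i, (gv n a i)^2 ≤ 2*c^2*(n:ℝ)*∑ i, (a i)^2 := by
      rw [← step2]; exact step1
    linarith
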